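/- Let Λ ⊂ ℝ⁴ be an acausal circle and let K ⊆ O₊(Λ) be a compact subset. Then there exists δ < 1 such that q(x,y) ≤ δ for all x ∈ K and all y ∈ O₊(Λ). -/

import Mathlib

noncomputable section

/-- The bilinear form `q(x,y) = -x₁y₁ - x₂y₂ + x₃y₃ + x₄y₄` on `ℝ⁴`. -/
def qf (x y : Fin 4 → ℝ) : ℝ := -(x 0 * y 0) - x 1 * y 1 + x 2 * y 2 + x 3 * y 3

/-- The identification `ℂ × ℂ ≅ ℝ⁴`, `(w, z) ↦ (Re w, Im w, Re z, Im z)`. -/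
def toR4 (p : ℂ × ℂ) : Fin 4 → ℝ := ![p.1.re, p.1.im, p.2.re, p.2.im]

/-- An acausal circle: the graph `{(F(z), z) : z ∈ S¹}` of a distance-decreasing map
`F : S¹ → S¹`, viewed inside `ℝ⁴`. -/
def IsAcausalCircle (Λ : Set (Fin 4 → ℝ)) : Prop :=
  ∃ F : ℂ → ℂ,
    (∀ z : ℂ, ‖z‖ = 1 → ‖F z‖ = 1) ∧
    (∀ z z' : ℂ, ‖z‖ = 1 → ‖z'‖ = 1 → z ≠ z' →
      ‖F z - F z'‖ < ‖z - z'‖) ∧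
    Λ = {x | ∃ z : ℂ, ‖z‖ = 1 ∧ x = toR4 (F z, z)}

/-- The invisible domain `O₊(Λ) = {x ∈ AdS₃ : q(x,ν) < 0 for all ν ∈ Λ}`. -/
def invisible (Λ : Set (Fin 4 → ℝ)) : Set (Fin 4 → ℝ) :=
  {x | qf x x = -1 ∧ ∀ ν ∈ Λ, qf x ν < 0}

/-- Cauchy–Schwarz in the plane. -/
lemma cs2 (a b c d : ℝ) :
    a * c + b * d ≤ Real.sqrt (a ^ 2 + b ^ 2) * Real.sqrt (c ^ 2 + d ^ 2) := by
  have h1 : Real.sqrt (a ^ 2 + b ^ 2) ^ 2 = a ^ 2 + b ^ 2 := Real.sq_sqrt (by positivity)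
  have h2 : Real.sqrt (c ^ 2 + d ^ 2) ^ 2 = c ^ 2 + d ^ 2 := Real.sq_sqrt (by positivity)
  have h3 : 0 ≤ Real.sqrt (a ^ 2 + b ^ 2) := Real.sqrt_nonneg _
  have h4 : 0 ≤ Real.sqrt (c ^ 2 + d ^ 2) := Real.sqrt_nonneg _
  nlinarith [sq_nonneg (a * d - b * c), mul_nonneg h3 h4,
    sq_nonneg (Real.sqrt (a ^ 2 + b ^ 2) * Real.sqrt (c ^ 2 + d ^ 2) - a * c - b * d)]

/-- A point of modulus one has `re² + im² = 1`. -/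
lemma abs_one_sq (z : ℂ) (hz : ‖z‖ = 1) : z.re ^ 2 + z.im ^ 2 = 1 := by
  have := Complex.sq_norm z
  rw [hz, Complex.normSq_apply] at this
  nlinarith [this]

/-- For `Λ` an acausal circle and `K ⊆ O₊(Λ)` compact, there is `δ < 1` with
`q(x,y) ≤ δ` for all `x ∈ K` and `y ∈ O₊(Λ)`. -/
theorem stmt3 (Λ : Set (Fin 4 → ℝ)) (hΛ : IsAcausalCircle Λ)
    (K : Set (Fin 4 → ℝ)) (hK : K ⊆ invisible Λ) (hKc : IsCompact K) :
    ∃ δ : ℝ, δ < 1 ∧ ∀ x ∈ K, ∀ y ∈ invisible Λ, qf x y ≤ δ := by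
  obtain ⟨F, hF1, hFd, hΛeq⟩ := hΛ
  rcases K.eq_empty_or_nonempty with hKe | hKne
  · exact ⟨0, by norm_num, fun x hx => by simp [hKe] at hx⟩
  -- members of Λ
  have hmem : ∀ z : ℂ, ‖z‖ = 1 → toR4 (F z, z) ∈ Λ := by
    intro z hz; rw [hΛeq]; exact ⟨z, hz, rfl⟩
  -- Λ is compact
  have hsph : ∀ z : ℂ, z ∈ Metric.sphere (0 : ℂ) 1 ↔ ‖z‖ = 1 := by
    intro z; simp [Complex.dist_eq]
  have hFcont : ContinuousOn F (Metric.sphere (0 : ℂ) 1) := by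
    refine (LipschitzOnWith.mk_one ?_).continuousOn
    intro z hz z' hz'
    rcases eq_or_ne z z' with rfl | hne
    · simp
    · rw [Complex.dist_eq, Complex.dist_eq]
      exact le_of_lt (hFd z z' ((hsph z).1 hz) ((hsph z').1 hz') hne)
  have hΛc : IsCompact Λ := by
    have himg : Λ = (fun z : ℂ => toR4 (F z, z)) '' Metric.sphere (0 : ℂ) 1 := by
      rw [hΛeq]; ext x
      constructor
      · rintro ⟨z, hz, rfl⟩; exact ⟨z, (hsph z).2 hz, rfl⟩
      · rintro ⟨z, hz, rfl⟩; exact ⟨z, (hsph z).1 hz, rfl⟩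
    rw [himg]
    refine (isCompact_sphere 0 1).image_of_continuousOn ?_
    refine continuousOn_pi.2 fun i => ?_
    fin_cases i
    · simpa [toR4, Function.comp_def] using Complex.continuous_re.comp_continuousOn hFcont
    · simpa [toR4, Function.comp_def] using Complex.continuous_im.comp_continuousOn hFcont
    · simpa [toR4] using Complex.continuous_re.continuousOn (s := Metric.sphere (0:ℂ) 1)
    · simpa [toR4] using Complex.continuous_im.continuousOn (s := Metric.sphere (0:ℂ) 1)
  -- uniform negativity on K × Λ
  have hqcont : Continuous fun p : (Fin 4 → ℝ) × (Fin 4 → ℝ) => qf p.1 p.2 := by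
    have h1 : ∀ i : Fin 4, Continuous fun p : (Fin 4 → ℝ) × (Fin 4 → ℝ) => p.1 i :=
      fun i => (continuous_apply i).comp continuous_fst
    have h2 : ∀ i : Fin 4, Continuous fun p : (Fin 4 → ℝ) × (Fin 4 → ℝ) => p.2 i :=
      fun i => (continuous_apply i).comp continuous_snd
    simp only [qf]
    exact ((((h1 0).mul (h2 0)).neg.sub ((h1 1).mul (h2 1))).add
      ((h1 2).mul (h2 2))).add ((h1 3).mul (h2 3))
  have hΛne : Λ.Nonempty := ⟨toR4 (F 1, 1), hmem 1 (by simp)⟩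
  obtain ⟨p₀, hp₀mem, hp₀max⟩ :=
    (hKc.prod hΛc).exists_isMaxOn (hKne.prod hΛne) hqcont.continuousOn
  set ε : ℝ := -(qf p₀.1 p₀.2) with hεdef
  have hε : 0 < ε := by
    have := (hK hp₀mem.1).2 p₀.2 hp₀mem.2
    simp only [hεdef]; linarith
  have hεb : ∀ x ∈ K, ∀ ν ∈ Λ, qf x ν ≤ -ε := by
    intro x hx ν hν
    have h' : qf x ν ≤ qf p₀.1 p₀.2 := hp₀max (show (x, ν) ∈ K ×ˢ Λ from ⟨hx, hν⟩)
    simp only [hεdef]; linarith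
  refine ⟨1 - ε ^ 2 / 2, by nlinarith, ?_⟩
  intro x hx y hy
  obtain ⟨hyq, hyν⟩ := hy
  obtain ⟨hxq, -⟩ := hK hx
  set w : Fin 4 → ℝ := fun i => x i + y i with hwdef
  have hwν : ∀ ν ∈ Λ, qf w ν < -ε := by
    intro ν hν
    have h1 := hεb x hx ν hν
    have h2 := hyν ν hν
    have h3 : qf w ν = qf x ν + qf y ν := by simp only [qf, hwdef]; ring
    linarith
  set A : ℝ := Real.sqrt (w 0 ^ 2 + w 1 ^ 2) with hAdef
  set B : ℝ := Real.sqrt (w 2 ^ 2 + w 3 ^ 2) with hBdef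
  have hA2 : A ^ 2 = w 0 ^ 2 + w 1 ^ 2 := Real.sq_sqrt (by positivity)
  have hB2 : B ^ 2 = w 2 ^ 2 + w 3 ^ 2 := Real.sq_sqrt (by positivity)
  have hAnn : 0 ≤ A := Real.sqrt_nonneg _
  have hBnn : 0 ≤ B := Real.sqrt_nonneg _
  -- Claim 1 : ε < A + B
  have hclaim1 : ε < A + B := by
    have hν1 := hwν (toR4 (F 1, 1)) (hmem 1 (by simp))
    have hq1 : qf w (toR4 (F 1, 1)) =
        -(w 0 * (F 1).re + w 1 * (F 1).im) + w 2 := by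
      simp [qf, toR4]; ring
    have hcs : w 0 * (F 1).re + w 1 * (F 1).im ≤ A := by
      have := cs2 (w 0) (w 1) (F 1).re (F 1).im
      rwa [abs_one_sq (F 1) (hF1 1 (by simp)), Real.sqrt_one, mul_one, ← hAdef] at this
    have hw2 : -(w 2) ≤ B := by nlinarith [sq_nonneg (B + w 2), sq_nonneg (w 3)]
    rw [hq1] at hν1
    linarith
  -- Claim 2 : B ≤ A - ε
  have hclaim2 : B ≤ A - ε := by
    rcases eq_or_lt_of_le hBnn with hB0 | hBpos
    · nlinarith
    · set z₀ : ℂ := ⟨w 2 / B, w 3 / B⟩ with hz₀def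
      have hz₀abs : ‖z₀‖ = 1 := by
        rw [Complex.norm_def, hz₀def, Complex.normSq_mk]
        rw [show w 2 / B * (w 2 / B) + w 3 / B * (w 3 / B)
            = (w 2 ^ 2 + w 3 ^ 2) / B ^ 2 by ring]
        rw [← hB2, div_self (by positivity), Real.sqrt_one]
      have hν0 := hwν (toR4 (F z₀, z₀)) (hmem z₀ hz₀abs)
      have hq0 : qf w (toR4 (F z₀, z₀)) =
          -(w 0 * (F z₀).re + w 1 * (F z₀).im) + (w 2 * (w 2 / B) + w 3 * (w 3 / B)) := by
        simp [qf, toR4, hz₀def]; ring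
      have hBeq : w 2 * (w 2 / B) + w 3 * (w 3 / B) = B := by
        have h5 : w 2 * (w 2 / B) + w 3 * (w 3 / B) = (w 2 ^ 2 + w 3 ^ 2) / B := by ring
        rw [h5, ← hB2, sq, mul_div_assoc, div_self hBpos.ne', mul_one]
      have hcs : w 0 * (F z₀).re + w 1 * (F z₀).im ≤ A := by
        have := cs2 (w 0) (w 1) (F z₀).re (F z₀).im
        rwa [abs_one_sq (F z₀) (hF1 z₀ hz₀abs), Real.sqrt_one, mul_one, ← hAdef] at this
      rw [hq0, hBeq] at hν0
      linarith
  -- conclude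
  have hww : qf w w = B ^ 2 - A ^ 2 := by
    rw [hA2, hB2]; simp only [qf, hwdef]; ring
  have hsum : qf w w = qf x x + 2 * qf x y + qf y y := by
    simp only [qf, hwdef]; ring
  rw [hxq, hyq] at hsum
  nlinarith [hww, hsum, hclaim1, hclaim2, hε, hAnn, hBnn]
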